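/- For every real number k with 0 < k < 1, setting k' = √(1 − k²), the complete elliptic integral of the first kind satisfies the descending Landen transformation K(k) = (2/(1+k')) · K((1−k')/(1+k')). -/

import Mathlib

open Real

/-- Complete elliptic integral of the first kind. -/
noncomputable def completeEllipticK (k : ℝ) : ℝ :=
  ∫ θ in (0:ℝ)..(π/2), 1 / Real.sqrt (1 - k^2 * Real.sin θ ^ 2)

lemma landen_cont {m : ℝ} (hm : m^2 < 1) :
    Continuous fun θ : ℝ => 1 / Real.sqrt (1 - m^2 * Real.sin θ ^ 2) := by
  have hpos : ∀ θ : ℝ, 0 < 1 - m^2 * Real.sin θ ^ 2 := by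
    intro θ
    nlinarith [Real.sin_sq_le_one θ, sq_nonneg m, sq_nonneg (m * Real.sin θ)]
  exact continuous_const.div
    ((continuous_const.sub (continuous_const.mul (Real.continuous_sin.pow 2))).sqrt)
    (fun θ => (Real.sqrt_pos.mpr (hpos θ)).ne')

lemma landen_symm {m : ℝ} (hm : m^2 < 1) :
    (∫ θ in (0:ℝ)..π, 1 / Real.sqrt (1 - m^2 * Real.sin θ ^ 2))
      = 2 * completeEllipticK m := by
  have hc := landen_cont hm
  have h1 := intervalIntegral.integral_add_adjacent_intervals
    (μ := MeasureTheory.volume) (a := (0:ℝ)) (b := π/2) (c := π)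
    (hc.intervalIntegrable _ _) (hc.intervalIntegrable _ _)
  have h2 : (∫ θ in (π/2:ℝ)..π, 1 / Real.sqrt (1 - m^2 * Real.sin θ ^ 2))
      = ∫ θ in (0:ℝ)..(π/2), 1 / Real.sqrt (1 - m^2 * Real.sin θ ^ 2) := by
    have h3 := intervalIntegral.integral_comp_sub_left (a := (0:ℝ)) (b := π/2)
      (fun θ => 1 / Real.sqrt (1 - m^2 * Real.sin θ ^ 2)) π
    simp only [Real.sin_pi_sub] at h3
    rw [h3, show π - π/2 = π/2 by ring, sub_zero]
  rw [completeEllipticK]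
  linarith

/-- Descending Landen transformation for the complete elliptic integral of the
first kind: `K(k) = (2/(1+k')) K((1−k')/(1+k'))` where `k' = √(1−k²)`, `0 < k < 1`. -/
theorem landen_K (k : ℝ) (hk0 : 0 < k) (hk1 : k < 1) :
    completeEllipticK k =
      2 / (1 + Real.sqrt (1 - k^2)) *
        completeEllipticK ((1 - Real.sqrt (1 - k^2)) / (1 + Real.sqrt (1 - k^2))) := by
  set c : ℝ := Real.sqrt (1 - k^2) with hcdef
  have hk2 : 0 < 1 - k^2 := by nlinarith
  have hc0 : 0 < c := Real.sqrt_pos.mpr hk2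
  have hcsq : c^2 = 1 - k^2 := Real.sq_sqrt hk2.le
  have hc1 : c < 1 := by nlinarith
  have h1c : (0:ℝ) < 1 + c := by linarith
  set k₁ : ℝ := (1 - c) / (1 + c) with hk1def
  have hk1sq : k₁^2 < 1 := by
    have h0 : 0 ≤ k₁ := div_nonneg (by linarith) h1c.le
    have h1 : k₁ < 1 := (div_lt_one h1c).mpr (by linarith)
    nlinarith
  have hksq : k^2 < 1 := by nlinarith
  set D : ℝ → ℝ := fun θ => c + (1-c) * Real.cos θ ^ 2 with hDdef
  set N : ℝ → ℝ := fun θ => (1-c) * Real.sin θ * Real.cos θ with hNdef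
  set g : ℝ → ℝ := fun θ => 2*θ - Real.arctan (N θ / D θ) with hgdef
  set g' : ℝ → ℝ := fun θ => (1+c) * D θ / (D θ^2 + N θ^2) with hg'def
  have hD : ∀ θ, 0 < D θ := fun θ => by
    simp only [hDdef]; nlinarith [sq_nonneg (Real.cos θ)]
  have hDN : ∀ θ, 0 < D θ^2 + N θ^2 := fun θ => by
    nlinarith [hD θ, sq_nonneg (N θ)]
  have hDNQ : ∀ θ, D θ^2 + N θ^2 = 1 - k^2 * Real.sin θ^2 := fun θ => by
    simp only [hDdef, hNdef]
    linear_combination (((1-c)^2 * Real.cos θ^2 + k^2) * (Real.sin_sq_add_cos_sq θ)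
      + (1 - Real.cos θ^2) * hcsq)
  have hgderiv : ∀ θ, HasDerivAt g (g' θ) θ := by
    intro θ
    have hDne : D θ ≠ 0 := (hD θ).ne'
    have hN' : HasDerivAt N ((1-c) * Real.cos θ * Real.cos θ
        + (1-c) * Real.sin θ * (-Real.sin θ)) θ := by
      simp only [hNdef]
      exact ((Real.hasDerivAt_sin θ).const_mul (1-c)).mul (Real.hasDerivAt_cos θ)
    have hD' : HasDerivAt D ((1-c) * (2 * Real.cos θ ^ 1 * (-Real.sin θ))) θ := by
      simp only [hDdef]
      exact (((Real.hasDerivAt_cos θ).pow 2).const_mul (1-c)).const_add c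
    have hq := (hN'.div hD' hDne).arctan
    have hgd := ((hasDerivAt_id θ).const_mul 2).sub hq
    have hgd2 : HasDerivAt g (2 - (1 + (N θ / D θ) ^ 2)⁻¹ *
        ((((1 - c) * Real.cos θ * Real.cos θ + -((1 - c) * Real.sin θ * Real.sin θ)) * D θ
          + N θ * ((1 - c) * (2 * Real.cos θ * Real.sin θ))) / D θ ^ 2)) θ := by
      have hgd' : HasDerivAt g _ θ := hgd
      simpa using hgd'
    set A : ℝ := ((1 - c) * Real.cos θ * Real.cos θ + -((1 - c) * Real.sin θ * Real.sin θ)) * D θ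
          + N θ * ((1 - c) * (2 * Real.cos θ * Real.sin θ)) with hAdef
    have key : 2*(D θ^2 + N θ^2) - A = (1+c) * D θ := by
      simp only [hAdef, hDdef, hNdef]
      linear_combination ((1-c)^2 * Real.cos θ^2 + c*(1-c)) * Real.sin_sq_add_cos_sq θ
    have h1q : (1 + (N θ / D θ)^2)⁻¹ = D θ^2 / (D θ^2 + N θ^2) := by
      rw [show (1 + (N θ / D θ)^2) = (D θ^2 + N θ^2) / D θ^2 by field_simp, inv_div]
    have h2 : D θ^2 / (D θ^2 + N θ^2) * (A / D θ^2) = A / (D θ^2 + N θ^2) := by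
      field_simp
    convert hgd2 using 1
    rw [h1q, h2, hg'def, eq_sub_iff_add_eq, ← add_div, div_eq_iff (hDN θ).ne']
    linarith [key]
  have hpoint : ∀ θ : ℝ, g' θ * (1 / Real.sqrt (1 - k₁^2 * Real.sin (g θ)^2))
      = (1+c) * (1 / Real.sqrt (1 - k^2 * Real.sin θ^2)) := by
    intro θ
    set r : ℝ := Real.sqrt (D θ^2 + N θ^2) with hrdef
    have hr : 0 < r := Real.sqrt_pos.mpr (hDN θ)
    have hr2 : r^2 = D θ^2 + N θ^2 := Real.sq_sqrt (hDN θ).le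
    have hDne : D θ ≠ 0 := (hD θ).ne'
    have hsq1q : Real.sqrt (1 + (N θ / D θ)^2) = r / D θ := by
      rw [show (1 + (N θ / D θ)^2) = (D θ^2 + N θ^2) / D θ^2 by field_simp,
        Real.sqrt_div (hDN θ).le, Real.sqrt_sq (hD θ).le]
    have hsin : Real.sin (g θ) = (1+c) * Real.sin θ * Real.cos θ / r := by
      rw [hgdef]
      simp only
      rw [Real.sin_sub, Real.sin_arctan, Real.cos_arctan, hsq1q,
        Real.sin_two_mul, Real.cos_two_mul]
      simp only [hNdef, hDdef]
      have hD0 : c + Real.cos θ ^ 2 * (1 - c) ≠ 0 := by rw [mul_comm]; exact hDne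
      field_simp
      ring
    have hval : 1 - k₁^2 * Real.sin (g θ)^2 = (D θ / r)^2 := by
      rw [hsin, hk1def]
      have hN2 : N θ^2 = (1-c)^2 * Real.sin θ^2 * Real.cos θ^2 := by
        simp only [hNdef]; ring
      field_simp
      linear_combination hr2 + hN2
    have hsqrt : Real.sqrt (1 - k₁^2 * Real.sin (g θ)^2) = D θ / r := by
      rw [hval, Real.sqrt_sq (div_nonneg (hD θ).le hr.le)]
    have hQr : Real.sqrt (1 - k^2 * Real.sin θ^2) = r := by
      rw [← hDNQ θ]
    rw [hsqrt, hQr, hg'def]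
    simp only
    rw [← hr2]
    field_simp
  have hg0 : g 0 = 0 := by
    simp [hgdef, hNdef, hDdef]
  have hgpi : g (π/2) = π := by
    simp [hgdef, hNdef, hDdef]
    ring
  have hDc : Continuous D := by
    rw [hDdef]
    exact continuous_const.add (continuous_const.mul (Real.continuous_cos.pow 2))
  have hNc : Continuous N := by
    rw [hNdef]
    exact (continuous_const.mul Real.continuous_sin).mul Real.continuous_cos
  have hg'cont : Continuous g' := by
    rw [hg'def]
    exact (continuous_const.mul hDc).div ((hDc.pow 2).add (hNc.pow 2))
      (fun θ => (hDN θ).ne')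
  have hsub := intervalIntegral.integral_comp_smul_deriv (a := (0:ℝ)) (b := π/2)
    (f := g) (f' := g') (g := fun u => 1 / Real.sqrt (1 - k₁^2 * Real.sin u ^ 2))
    (fun x _ => hgderiv x) hg'cont.continuousOn (landen_cont hk1sq)
  rw [hg0, hgpi] at hsub
  have hlhs : (∫ x in (0:ℝ)..π/2,
        g' x • ((fun u => 1 / Real.sqrt (1 - k₁^2 * Real.sin u ^ 2)) ∘ g) x)
      = (1+c) * completeEllipticK k := by
    rw [completeEllipticK, ← intervalIntegral.integral_const_mul]
    apply intervalIntegral.integral_congr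
    intro x _
    simpa [Function.comp, smul_eq_mul] using hpoint x
  rw [hlhs, landen_symm hk1sq] at hsub
  field_simp
  linarith [hsub]
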